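/- arXiv:2006.01178 — 5 statements merged into one kernel-verified Lean document; each statement's English description precedes it below -/
import Mathlib

section
/- Let (x̄, ȳ) ∈ D where D = {(x,y) : ∑_{i∈I} x_i = ∑_{j∈J} y_j, x_i ∈ [α'_i, β'_i], y_j ∈ [α''_j, β''_j]}. If there exists λ̄ ∈ ℝ such that for all i ∈ I: g_i(x̄,ȳ) ≥ λ̄ if x̄_i = α'_i, g_i(x̄,ȳ) = λ̄ if α'_i < x̄_i < β'_i, g_i(x̄,ȳ) ≤ λ̄ if x̄_i = β'_i, and for all j ∈ J: h_j(x̄,ȳ) ≤ λ̄ if ȳ_j = α''_j, h_j(x̄,ȳ) = λ̄ if α''_j < ȳ_j < β''_j, h_j(x̄,ȳ) ≥ λ̄ if ȳ_j = β''_j, then (x̄,ȳ) solves the variational inequality: ∑_{i∈I} g_i(x̄,ȳ)(x_i − x̄_i) − ∑_{j∈J} h_j(x̄,ȳ)(y_j − ȳ_j) ≥ 0 for all (x,y) ∈ D. -/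
/-- equilibrium conditions imply the variational inequality (Prop 3.1 (a)). -/
theorem stmt_0 {I J : Type*} [Fintype I] [Fintype J]
    (α' β' : I → ℝ) (α'' β'' : J → ℝ)
    (g : I → (I → ℝ) → (J → ℝ) → ℝ) (h : J → (I → ℝ) → (J → ℝ) → ℝ)
    (D : Set ((I → ℝ) × (J → ℝ)))
    (hD : D = {xy | ∑ i, xy.1 i = ∑ j, xy.2 j ∧
      (∀ i, xy.1 i ∈ Set.Icc (α' i) (β' i)) ∧ (∀ j, xy.2 j ∈ Set.Icc (α'' j) (β'' j))})
    (xb : I → ℝ) (yb : J → ℝ) (hmem : (xb, yb) ∈ D) (lam : ℝ)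
    (hg1 : ∀ i, xb i = α' i → g i xb yb ≥ lam)
    (hg2 : ∀ i, α' i < xb i → xb i < β' i → g i xb yb = lam)
    (hg3 : ∀ i, xb i = β' i → g i xb yb ≤ lam)
    (hh1 : ∀ j, yb j = α'' j → h j xb yb ≤ lam)
    (hh2 : ∀ j, α'' j < yb j → yb j < β'' j → h j xb yb = lam)
    (hh3 : ∀ j, yb j = β'' j → h j xb yb ≥ lam) :
    ∀ xy ∈ D, ∑ i, g i xb yb * (xy.1 i - xb i) - ∑ j, h j xb yb * (xy.2 j - yb j) ≥ 0 := by
  subst hD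
  obtain ⟨hbalb, hxb, hyb⟩ := hmem
  rintro ⟨x, y⟩ ⟨hbal, hx, hy⟩
  dsimp only at hbalb hxb hyb hbal hx hy
  have hgterm : ∀ i, g i xb yb * (x i - xb i) ≥ lam * (x i - xb i) := by
    intro i
    rcases eq_or_lt_of_le (hxb i).1 with ha | ha
    · have hfac : x i - xb i ≥ 0 := by
        have := (hx i).1; linarith
      exact mul_le_mul_of_nonneg_right (hg1 i ha.symm) hfac
    · rcases eq_or_lt_of_le (hxb i).2 with hb | hb
      · have hfac : x i - xb i ≤ 0 := by
          have := (hx i).2; linarith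
        exact mul_le_mul_of_nonpos_right (hg3 i hb) hfac
      · rw [hg2 i ha hb]
  have hhterm : ∀ j, h j xb yb * (y j - yb j) ≤ lam * (y j - yb j) := by
    intro j
    rcases eq_or_lt_of_le (hyb j).1 with ha | ha
    · have hfac : y j - yb j ≥ 0 := by
        have := (hy j).1; linarith
      exact mul_le_mul_of_nonneg_right (hh1 j ha.symm) hfac
    · rcases eq_or_lt_of_le (hyb j).2 with hb | hb
      · have hfac : y j - yb j ≤ 0 := by
          have := (hy j).2; linarith
        exact mul_le_mul_of_nonpos_right (hh3 j hb) hfac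
      · rw [hh2 j ha hb]
  have h1 : ∑ i, g i xb yb * (x i - xb i) ≥ ∑ i, lam * (x i - xb i) :=
    Finset.sum_le_sum fun i _ => hgterm i
  have h2 : ∑ j, h j xb yb * (y j - yb j) ≤ ∑ j, lam * (y j - yb j) :=
    Finset.sum_le_sum fun j _ => hhterm j
  have key : ∑ i, lam * (x i - xb i) - ∑ j, lam * (y j - yb j) = 0 := by
    simp only [← Finset.mul_sum, Finset.sum_sub_distrib]
    
    rw [hbal, hbalb]; ring
  simp only [ge_iff_le] at *
  linarith
end

section
/- Under the same setting, if a pair (x̄, λ̄) ∈ D(x̄) × ℝ^n satisfies ∃ p̄ ∈ P(x̄) with ∑_{i∈I} ⟨p̄^i − λ̄, y^i − x̄^i⟩ ≥ 0 for all y ∈ Y(x̄), then x̄ solves the QVI: ⟨p̄, y − x̄⟩ ≥ 0 for all y ∈ D(x̄). -/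
open scoped RealInnerProductSpace

/-- existence of a multiplier `λ̄` implies that `x̄` solves the QVI,
Prop 4.1 (b). -/
theorem stmt_5 {n : ℕ} {I : Type*} [Fintype I]
    (Y : I → (I → EuclideanSpace ℝ (Fin n)) → Set (EuclideanSpace ℝ (Fin n)))
    (hYne : ∀ i x, (Y i x).Nonempty) (hYcv : ∀ i x, Convex ℝ (Y i x))
    (hYcp : ∀ i x, IsCompact (Y i x))
    (xb : I → EuclideanSpace ℝ (Fin n))
    (hbal : ∑ i, xb i = 0) (hfeas : ∀ i, xb i ∈ Y i xb)
    (pb : I → EuclideanSpace ℝ (Fin n)) (lam : EuclideanSpace ℝ (Fin n))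
    (hmult : ∀ y : I → EuclideanSpace ℝ (Fin n),
      (∀ i, y i ∈ Y i xb) → ∑ i, ⟪pb i - lam, y i - xb i⟫ ≥ 0) :
    ∀ y : I → EuclideanSpace ℝ (Fin n),
      (∑ i, y i = 0) → (∀ i, y i ∈ Y i xb) → ∑ i, ⟪pb i, y i - xb i⟫ ≥ 0 := by
  intro y hy hyY
  have h := hmult y hyY
  have hsum : ∑ i, (y i - xb i) = 0 := by
    rw [Finset.sum_sub_distrib, hy, hbal, sub_zero]
  have key : ∑ i, ⟪pb i, y i - xb i⟫ = ∑ i, ⟪pb i - lam, y i - xb i⟫ := by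
    simp only [inner_sub_left]
    rw [Finset.sum_sub_distrib, ← inner_sum, hsum, inner_zero_right, sub_zero]
  rw [key]; exact h
end

section
/- Suppose: (C1) Ỹ_i ⊂ ℝ^n convex compact, Y_i(x) ⊆ Ỹ_i convex compact for all x; (C2) p^i(x) = p^i(x^i) is the unique solution of max_{p∈V_i}{⟨p, x^i⟩ − (β_i/2)‖p − v̄^i‖²} with V_i nonempty compact convex, so p : Ỹ → ℝ^{nm} is continuous; (C3) x ∈ Y(x) for all x ∈ D̃ where D̃ = {y ∈ Ỹ : ∑_i y^i = 0} is nonempty. Then the single-valued QVI has a solution: there exists x̄ ∈ D(x̄) = {y : ∑_i y^i = 0, y^i ∈ Y_i(x̄)} with ⟨p(x̄), y − x̄⟩ ≥ 0 for all y ∈ D(x̄). -/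
open scoped RealInnerProductSpace

/-- under (C1)–(C3) the single-valued market QVI (6.11) has a
solution (Prop 6.2). -/
theorem stmt_11 {n : ℕ} {I : Type*} [Fintype I]
    -- (C1)
    (Yt : I → Set (EuclideanSpace ℝ (Fin n)))
    (hYtcv : ∀ i, Convex ℝ (Yt i)) (hYtcp : ∀ i, IsCompact (Yt i))
    (Y : I → (I → EuclideanSpace ℝ (Fin n)) → Set (EuclideanSpace ℝ (Fin n)))
    (hYsub : ∀ i x, Y i x ⊆ Yt i)
    (hYcv : ∀ i x, Convex ℝ (Y i x)) (hYcp : ∀ i x, IsCompact (Y i x))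
    -- (C2): p^i(x) = p^i(x^i) is the unique maximizer of the regularized problem
    (V : I → Set (EuclideanSpace ℝ (Fin n)))
    (hVne : ∀ i, (V i).Nonempty) (hVcp : ∀ i, IsCompact (V i))
    (hVcv : ∀ i, Convex ℝ (V i))
    (vbar : I → EuclideanSpace ℝ (Fin n)) (β : I → ℝ) (hβ : ∀ i, 0 < β i)
    (p : (I → EuclideanSpace ℝ (Fin n)) → I → EuclideanSpace ℝ (Fin n))
    (hpdef : ∀ x i, p x i ∈ V i ∧
      ∀ q ∈ V i, q ≠ p x i →
        ⟪q, x i⟫ - β i / 2 * ‖q - vbar i‖ ^ 2 <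
          ⟪p x i, x i⟫ - β i / 2 * ‖p x i - vbar i‖ ^ 2)
    (hpcont : Continuous p)
    -- (C3): x ∈ Y(x) on the nonempty set D̃
    (hDtne : ∃ y : I → EuclideanSpace ℝ (Fin n), (∀ i, y i ∈ Yt i) ∧ ∑ i, y i = 0)
    (hxY : ∀ x : I → EuclideanSpace ℝ (Fin n),
      (∀ i, x i ∈ Yt i) → (∑ i, x i = 0) → ∀ i, x i ∈ Y i x) :
    ∃ xb : I → EuclideanSpace ℝ (Fin n), (∑ i, xb i = 0) ∧ (∀ i, xb i ∈ Y i xb) ∧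
      ∀ y : I → EuclideanSpace ℝ (Fin n), (∑ i, y i = 0) → (∀ i, y i ∈ Y i xb) →
        ∑ i, ⟪p xb i, y i - xb i⟫ ≥ 0 := by
  classical
  set φ : (I → EuclideanSpace ℝ (Fin n)) → ℝ :=
    fun x => ∑ i, (⟪p x i, x i⟫ - β i / 2 * ‖p x i - vbar i‖ ^ 2) with hφ
  -- subgradient inequality
  have hsub : ∀ u w : I → EuclideanSpace ℝ (Fin n),
      φ w + ∑ i, ⟪p w i, u i - w i⟫ ≤ φ u := by
    intro u w
    have h1 : ∀ i, ⟪p w i, u i⟫ - β i / 2 * ‖p w i - vbar i‖ ^ 2 ≤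
        ⟪p u i, u i⟫ - β i / 2 * ‖p u i - vbar i‖ ^ 2 := by
      intro i
      rcases eq_or_ne (p w i) (p u i) with h | h
      · rw [h]
      · exact ((hpdef u i).2 _ (hpdef w i).1 h).le
    calc φ w + ∑ i, ⟪p w i, u i - w i⟫
        = ∑ i, (⟪p w i, u i⟫ - β i / 2 * ‖p w i - vbar i‖ ^ 2) := by
          rw [hφ, ← Finset.sum_add_distrib]
          refine Finset.sum_congr rfl fun i _ => ?_
          rw [inner_sub_right]; ring
      _ ≤ φ u := Finset.sum_le_sum fun i _ => h1 i
  have hφc : Continuous φ := by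
    refine continuous_finset_sum _ fun i _ => ?_
    have hpi : Continuous fun x : I → EuclideanSpace ℝ (Fin n) => p x i :=
      (continuous_apply i).comp hpcont
    exact (hpi.inner (continuous_apply i)).sub
      (continuous_const.mul (((hpi.sub continuous_const).norm).pow 2))
  set D : Set (I → EuclideanSpace ℝ (Fin n)) :=
    {x | (∀ i, x i ∈ Yt i) ∧ ∑ i, x i = 0} with hD
  have hDcp : IsCompact D := by
    have h1 : IsCompact (Set.univ.pi Yt) := isCompact_univ_pi hYtcp
    have h2 : IsClosed {x : I → EuclideanSpace ℝ (Fin n) | ∑ i, x i = 0} :=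
      isClosed_eq (continuous_finset_sum _ fun i _ => continuous_apply i) continuous_const
    have hEq : D = Set.univ.pi Yt ∩ {x | ∑ i, x i = 0} := by
      ext x; simp [hD, Set.mem_pi]
    rw [hEq]; exact h1.inter_right h2
  have hDne : D.Nonempty := by
    obtain ⟨y, hy1, hy2⟩ := hDtne
    exact ⟨y, hy1, hy2⟩
  obtain ⟨xb, hxbD, hmin⟩ := hDcp.exists_isMinOn hDne hφc.continuousOn
  -- VI over D
  have hVI : ∀ y ∈ D, 0 ≤ ∑ i, ⟪p xb i, y i - xb i⟫ := by
    intro y hy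
    set d : I → EuclideanSpace ℝ (Fin n) := fun i => y i - xb i with hd
    set g : ℝ → ℝ := fun t => ∑ i, ⟪p (fun i => xb i + t • d i) i, d i⟫ with hg
    have hmem : ∀ t : ℝ, 0 ≤ t → t ≤ 1 → (fun i => xb i + t • d i) ∈ D := by
      intro t ht0 ht1
      constructor
      · intro i
        have h := hYtcv i (hxbD.1 i) (hy.1 i) (by linarith : (0:ℝ) ≤ 1 - t) ht0
          (by ring)
        have heq : (1 - t) • xb i + t • y i = xb i + t • d i := by
          rw [hd]; module
        rwa [heq] at h
      · have : ∑ i, (xb i + t • d i) = ∑ i, xb i + t • ∑ i, d i := by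
          rw [Finset.sum_add_distrib, Finset.smul_sum]
        rw [this, hxbD.2]
        have : ∑ i, d i = 0 := by
          simp only [hd, Finset.sum_sub_distrib, hy.2, hxbD.2, sub_zero]
        rw [this, smul_zero, add_zero]
    have key : ∀ t : ℝ, 0 < t → t ≤ 1 → 0 ≤ g t := by
      intro t ht0 ht1
      have hxt := hmem t ht0.le ht1
      have h1 := hsub xb (fun i => xb i + t • d i)
      have h2 : φ xb ≤ φ (fun i => xb i + t • d i) := hmin hxt
      have h3 : ∑ i, ⟪p (fun i => xb i + t • d i) i, xb i - (xb i + t • d i)⟫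
          = -(t * g t) := by
        rw [hg, Finset.mul_sum, ← Finset.sum_neg_distrib]
        refine Finset.sum_congr rfl fun i _ => ?_
        have : xb i - (xb i + t • d i) = -(t • d i) := by abel
        rw [this, inner_neg_right, real_inner_smul_right]
      rw [h3] at h1
      nlinarith
    have hgc : Continuous g := by
      refine continuous_finset_sum _ fun i _ => ?_
      have h1 : Continuous fun t : ℝ => (fun i => xb i + t • d i) := by
        refine continuous_pi fun j => ?_
        exact continuous_const.add (continuous_id.smul continuous_const)
      exact ((continuous_apply i).comp (hpcont.comp h1)).inner continuous_const
    have htend : Filter.Tendsto g (nhdsWithin 0 (Set.Ioi 0)) (nhds (g 0)) :=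
      (hgc.tendsto 0).mono_left nhdsWithin_le_nhds
    have hev : ∀ᶠ t in nhdsWithin (0:ℝ) (Set.Ioi 0), 0 ≤ g t := by
      filter_upwards [Ioc_mem_nhdsGT_of_mem (by constructor <;> norm_num :
        (0:ℝ) ∈ Set.Ico (0:ℝ) 1)] with t ht using key t ht.1 ht.2
    have h0 : 0 ≤ g 0 := ge_of_tendsto htend hev
    have hg0 : g 0 = ∑ i, ⟪p xb i, y i - xb i⟫ := by
      simp only [hg, hd, zero_smul, add_zero]
    rwa [hg0] at h0
  -- assemble QVI
  have hxbY : ∀ i, xb i ∈ Y i xb := hxY xb hxbD.1 hxbD.2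
  refine ⟨xb, hxbD.2, hxbY, fun y hy1 hy2 => ?_⟩
  exact hVI y ⟨fun i => hYsub i xb (hy2 i), hy1⟩
end

section
/- Let D̃ ⊆ ℝ^N be nonempty compact, p : D̃ → ℝ^N continuous, D : D̃ → Π(D̃) lower semicontinuous with x ∈ D(x) for all x ∈ D̃. Let {w^(s)} ⊂ D̃ and δ_s → 0 with δ_s > 0 satisfy, for each s, ⟨p(w^(s)), y − w^(s)⟩ ≥ −δ_s for all y ∈ D(w^(s)). Then every limit point w̄ of {w^(s)} satisfies w̄ ∈ D(w̄) and ⟨p(w̄), y − w̄⟩ ≥ 0 for all y ∈ D(w̄), i.e., w̄ solves the quasi-variational inequality. -/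
open scoped RealInnerProductSpace

/-- Lower semicontinuity of a set-valued mapping on a set (Definition 2.1 (b)). -/
def SetLSCOn {X Z : Type*} [TopologicalSpace X] [TopologicalSpace Z]
    (G : X → Set Z) (W : Set X) : Prop :=
  ∀ v ∈ W, ∀ U : Set Z, IsOpen U → (U ∩ G v).Nonempty →
    ∃ V : Set X, IsOpen V ∧ v ∈ V ∧ ∀ w ∈ V ∩ W, (U ∩ G w).Nonempty

/-- limit points of approximate QVI solutions with vanishing
tolerances solve the QVI (core of Theorem 6.1 (ii)). -/
theorem stmt_12 {N : ℕ}
    (Dt : Set (EuclideanSpace ℝ (Fin N)))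
    (hDtne : Dt.Nonempty) (hDtcp : IsCompact Dt)
    (p : EuclideanSpace ℝ (Fin N) → EuclideanSpace ℝ (Fin N))
    (hp : ContinuousOn p Dt)
    (D : EuclideanSpace ℝ (Fin N) → Set (EuclideanSpace ℝ (Fin N)))
    (hDsub : ∀ x ∈ Dt, D x ⊆ Dt)
    (hDlsc : SetLSCOn D Dt)
    (hxD : ∀ x ∈ Dt, x ∈ D x)
    (w : ℕ → EuclideanSpace ℝ (Fin N)) (hw : ∀ s, w s ∈ Dt)
    (δ : ℕ → ℝ) (hδpos : ∀ s, 0 < δ s)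
    (hδ : Filter.Tendsto δ Filter.atTop (nhds 0))
    (happrox : ∀ s, ∀ y ∈ D (w s), ⟪p (w s), y - w s⟫ ≥ -δ s)
    (wbar : EuclideanSpace ℝ (Fin N))
    (φ : ℕ → ℕ) (hφ : StrictMono φ)
    (hlim : Filter.Tendsto (w ∘ φ) Filter.atTop (nhds wbar)) :
    wbar ∈ D wbar ∧ ∀ y ∈ D wbar, ⟪p wbar, y - wbar⟫ ≥ 0 := by
  have hwbar : wbar ∈ Dt :=
    hDtcp.isClosed.mem_of_tendsto hlim (Filter.Eventually.of_forall fun t => hw (φ t))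
  refine ⟨hxD wbar hwbar, ?_⟩
  intro y hy
  set c : ℝ := ⟪p wbar, y - wbar⟫ with hc
  by_contra hneg
  push_neg at hneg
  set ε : ℝ := -c with hε
  have hεpos : 0 < ε := by simp only [hε]; linarith
  -- continuity of F (z, y') ↦ ⟪p z, y' - z⟫ on Dt ×ˢ univ
  have hF : ContinuousOn
      (fun x : EuclideanSpace ℝ (Fin N) × EuclideanSpace ℝ (Fin N) => ⟪p x.1, x.2 - x.1⟫)
      (Dt ×ˢ (Set.univ : Set (EuclideanSpace ℝ (Fin N)))) := by
    apply ContinuousOn.inner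
    · exact hp.comp continuousOn_fst (fun x hx => hx.1)
    · exact (continuous_snd.sub continuous_fst).continuousOn
  have hmem : (wbar, y) ∈ Dt ×ˢ (Set.univ : Set (EuclideanSpace ℝ (Fin N))) :=
    ⟨hwbar, trivial⟩
  have hcw := hF (wbar, y) hmem
  have hS : {x : EuclideanSpace ℝ (Fin N) × EuclideanSpace ℝ (Fin N) |
      ⟪p x.1, x.2 - x.1⟫ < c + ε / 2} ∈
      nhdsWithin (wbar, y) (Dt ×ˢ (Set.univ : Set (EuclideanSpace ℝ (Fin N)))) := by
    have : Set.Iio (c + ε / 2) ∈ nhds (⟪p wbar, y - wbar⟫ : ℝ) := by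
      apply Iio_mem_nhds; simp only [← hc]; linarith
    exact hcw this
  rw [nhdsWithin_prod_eq, nhdsWithin_univ, Filter.mem_prod_iff] at hS
  obtain ⟨A, hA, B, hB, hAB⟩ := hS
  obtain ⟨U, hUB, hUopen, hyU⟩ := mem_nhds_iff.mp hB
  obtain ⟨V, hVopen, hwbarV, hV⟩ := hDlsc wbar hwbar U hUopen ⟨y, hyU, hy⟩
  obtain ⟨A', hA'open, hwbarA', hA'A⟩ := mem_nhdsWithin.mp hA
  have h1 : ∀ᶠ t in Filter.atTop, (w ∘ φ) t ∈ V ∩ A' :=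
    hlim.eventually_mem ((hVopen.inter hA'open).mem_nhds ⟨hwbarV, hwbarA'⟩)
  have h2 : ∀ᶠ t in Filter.atTop, δ (φ t) < ε / 2 := by
    have := hδ.comp hφ.tendsto_atTop
    exact Filter.Tendsto.eventually_lt_const (by linarith) this
  obtain ⟨t, ht1, ht2⟩ := (h1.and h2).exists
  set z := w (φ t) with hz
  obtain ⟨y', hy'U, hy'D⟩ := hV z ⟨ht1.1, hw (φ t)⟩
  have hzy : (z, y') ∈ A ×ˢ B := ⟨hA'A ⟨ht1.2, hw (φ t)⟩, hUB hy'U⟩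
  have hFin : ⟪p z, y' - z⟫ < c + ε / 2 := hAB hzy
  have hlow : ⟪p z, y' - z⟫ ≥ -δ (φ t) := happrox (φ t) y' hy'D
  have : -(ε / 2) < c + ε / 2 := by linarith
  simp only [hε] at this
  linarith
end

section
/- Suppose D̃ ⊂ ℝ^N is nonempty convex compact, p : D̃ → ℝ^N is continuous, D : D̃ → Π(D̃) has nonempty convex compact values with x ∈ D(x), and Z(x) = argmin_{y ∈ D(x)} ⟨p(x), y⟩. Fix a stage s with tolerance δ_s > 0, β ∈ (0,1), and step-size parameters τ_{l,s} ∈ (0,1) with τ_{l,s} → 0 as l → ∞. Generate x^(k+1) = x^(k) + θ_k (y^(k) − x^(k)) with y^(k) ∈ Z(x^(k)), continuing while ⟨p(x^(k)), x^(k) − y^(k)⟩ ≥ δ_s, where θ_k is kept in [θ_{k-1}, τ_{l,s}] when the test ⟨p(x^(k)), d^(k-1)⟩ ≤ β⟨p(x^(k-1)), d^(k-1)⟩ passes and otherwise reduced below τ_{l+1,s} (incrementing l). Assume p is the gradient of a convex function η bounded below on D̃. Then the stage terminates after finitely many iterations, i.e., eventually ⟨p(x^(k)), x^(k) − y^(k)⟩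 < δ_s. -/
open scoped RealInnerProductSpace

open Filter Topology

private lemma grad_convex_ineq {N : ℕ} (η : EuclideanSpace ℝ (Fin N) → ℝ)
    (hη : ConvexOn ℝ Set.univ η) {a g : EuclideanSpace ℝ (Fin N)}
    (hg : HasGradientAt η g a) (b : EuclideanSpace ℝ (Fin N)) :
    ⟪g, b - a⟫ ≤ η b - η a := by
  set c : ℝ → EuclideanSpace ℝ (Fin N) := fun t => a + t • (b - a) with hc
  have hc0 : c 0 = a := by simp [hc]
  have hc1 : c 1 = b := by simp [hc]
  have hcd : HasDerivAt c (b - a) 0 := by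
    simpa [hc] using ((hasDerivAt_id (0 : ℝ)).smul_const (b - a)).const_add a
  have hcomp : HasDerivAt (η ∘ c) ⟪g, b - a⟫ 0 := by
    have h1 : HasFDerivAt η (InnerProductSpace.toDual ℝ _ g) (c 0) := by
      rw [hc0]; exact hg.hasFDerivAt
    have := h1.comp_hasDerivAt 0 hcd
    simpa [InnerProductSpace.toDual_apply_apply] using this
  have hconv : ConvexOn ℝ Set.univ (η ∘ c) := by
    have := hη.comp_affineMap (AffineMap.lineMap a b : ℝ →ᵃ[ℝ] EuclideanSpace ℝ (Fin N))
    have heq : (η ∘ (AffineMap.lineMap a b : ℝ →ᵃ[ℝ] EuclideanSpace ℝ (Fin N))) = η ∘ c := by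
      funext t
      simp [hc, AffineMap.lineMap_apply, Function.comp]
      congr 1
      module
    simpa [heq] using this
  calc ⟪g, b - a⟫ ≤ (η (c 1) - η (c 0)) / (1 - 0) := by
        simpa [slope_def_field, Function.comp] using
          hconv.le_slope_of_hasDerivAt (Set.mem_univ (0:ℝ)) (Set.mem_univ (1:ℝ)) one_pos hcomp
    _ = η b - η a := by rw [hc0, hc1]; ring

/-- each stage of the parametric conditional gradient method (PCGM)
terminates after finitely many iterations (Prop 6.3): along the generated sequence
the stopping test `⟨p(x^(k)), x^(k) − y^(k)⟩ < δ_s` eventually holds. -/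
theorem stmt_14 {N : ℕ}
    (Dt : Set (EuclideanSpace ℝ (Fin N)))
    (hDtne : Dt.Nonempty) (hDtcv : Convex ℝ Dt) (hDtcp : IsCompact Dt)
    (p : EuclideanSpace ℝ (Fin N) → EuclideanSpace ℝ (Fin N))
    (hpcont : ContinuousOn p Dt)
    (D : EuclideanSpace ℝ (Fin N) → Set (EuclideanSpace ℝ (Fin N)))
    (hDsub : ∀ z ∈ Dt, D z ⊆ Dt)
    (hDne : ∀ z ∈ Dt, (D z).Nonempty) (hDcv : ∀ z ∈ Dt, Convex ℝ (D z))
    (hDcp : ∀ z ∈ Dt, IsCompact (D z)) (hxD : ∀ z ∈ Dt, z ∈ D z)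
    -- p is the gradient of a convex function η bounded below on D̃
    (η : EuclideanSpace ℝ (Fin N) → ℝ)
    (hη : ConvexOn ℝ Set.univ η) (hgrad : ∀ z, HasGradientAt η (p z) z)
    (hbdd : ∃ C : ℝ, ∀ z ∈ Dt, C ≤ η z)
    -- stage parameters
    (δ : ℝ) (hδ : 0 < δ) (β : ℝ) (hβ : β ∈ Set.Ioo (0 : ℝ) 1)
    (τ : ℕ → ℝ) (hτ : ∀ l, τ l ∈ Set.Ioo (0 : ℝ) 1)
    (hτlim : Filter.Tendsto τ Filter.atTop (nhds 0))
    -- the generated sequences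
    (x y : ℕ → EuclideanSpace ℝ (Fin N)) (θ : ℕ → ℝ) (l : ℕ → ℕ)
    (hx0 : x 0 ∈ Dt) (hl0 : l 0 = 0) (hθ0 : θ 0 ∈ Set.Ioc 0 (τ 0))
    (hy : ∀ k, y k ∈ D (x k) ∧ IsMinOn (fun z => ⟪p (x k), z⟫) (D (x k)) (y k))
    (hupd : ∀ k, x (k + 1) = x k + θ k • (y k - x k))
    (hstep : ∀ k,
      (⟪p (x (k + 1)), y k - x k⟫ ≤ β * ⟪p (x k), y k - x k⟫ →
        θ (k + 1) ∈ Set.Icc (θ k) (τ (l k)) ∧ l (k + 1) = l k) ∧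
      (¬ (⟪p (x (k + 1)), y k - x k⟫ ≤ β * ⟪p (x k), y k - x k⟫) →
        θ (k + 1) ∈ Set.Ioc 0 (min (θ k) (τ (l k + 1))) ∧ l (k + 1) = l k + 1)) :
    ∃ k, ⟪p (x k), x k - y k⟫ < δ := by
  by_contra hcon
  push_neg at hcon
  obtain ⟨hβ0, hβ1⟩ := hβ
  -- step sizes positive and bounded by τ (l k)
  have hθpt : ∀ k, 0 < θ k ∧ θ k ≤ τ (l k) := by
    intro k
    induction k with
    | zero => exact ⟨hθ0.1, by rw [hl0]; exact hθ0.2⟩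
    | succ k ih =>
      by_cases hT : ⟪p (x (k + 1)), y k - x k⟫ ≤ β * ⟪p (x k), y k - x k⟫
      · obtain ⟨h1, h2⟩ := (hstep k).1 hT
        exact ⟨lt_of_lt_of_le ih.1 h1.1, by rw [h2]; exact h1.2⟩
      · obtain ⟨h1, h2⟩ := (hstep k).2 hT
        exact ⟨h1.1, by rw [h2]; exact h1.2.trans (min_le_right _ _)⟩
  have hθpos : ∀ k, 0 < θ k := fun k => (hθpt k).1
  have hθle1 : ∀ k, θ k ≤ 1 := fun k => (hθpt k).2.trans (hτ _).2.le
  -- the iterates stay in Dt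
  have hxmem : ∀ k, x k ∈ Dt := by
    intro k
    induction k with
    | zero => exact hx0
    | succ k ih =>
      have hyk : y k ∈ Dt := hDsub _ ih (hy k).1
      have hmem := hDtcv ih hyk (by linarith [hθpos k, hθle1 k] : (0:ℝ) ≤ 1 - θ k)
        (hθpos k).le (by ring)
      rw [hupd k]
      convert hmem using 1
      module
  have hymem : ∀ k, y k ∈ Dt := fun k => hDsub _ (hxmem k) (hy k).1
  -- the stopping test fails strongly
  have hneg : ∀ k, ⟪p (x k), y k - x k⟫ ≤ -δ := by
    intro k
    have h := hcon k
    have he : ⟪p (x k), y k - x k⟫ = -⟪p (x k), x k - y k⟫ := by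
      rw [← inner_neg_right]; congr 1; abel
    rw [he]; linarith
  by_cases hfail : ∃ᶠ k in atTop, ¬ (⟪p (x (k + 1)), y k - x k⟫ ≤ β * ⟪p (x k), y k - x k⟫)
  · -- infinitely many step reductions
    obtain ⟨φ, hφm, hφP⟩ := extraction_of_frequently_atTop hfail
    have hlmono : Monotone l := by
      apply monotone_nat_of_le_succ
      intro k
      by_cases hT : ⟪p (x (k + 1)), y k - x k⟫ ≤ β * ⟪p (x k), y k - x k⟫
      · rw [((hstep k).1 hT).2]
      · rw [((hstep k).2 hT).2]; omega
    have hlφ : ∀ n, n + 1 ≤ l (φ n + 1) := by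
      intro n
      induction n with
      | zero => rw [((hstep (φ 0)).2 (hφP 0)).2]; omega
      | succ n ih =>
        have h1 : φ n + 1 ≤ φ (n + 1) := hφm (Nat.lt_succ_self n)
        have h2 := hlmono h1
        rw [((hstep (φ (n + 1))).2 (hφP (n + 1))).2]
        omega
    have hltop : Tendsto l atTop atTop :=
      tendsto_atTop_atTop_of_monotone hlmono
        (fun b => ⟨φ b + 1, le_trans (by omega) (hlφ b)⟩)
    have hθ0' : Tendsto θ atTop (nhds 0) :=
      squeeze_zero (fun k => (hθpos k).le) (fun k => (hθpt k).2) (hτlim.comp hltop)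
    have hprodcp : IsCompact (Dt ×ˢ Dt) := hDtcp.prod hDtcp
    obtain ⟨⟨xb, yb⟩, hmem, ψ, hψm, hψt⟩ := hprodcp.tendsto_subseq
      (x := fun n => (x (φ n), y (φ n))) (fun n => Set.mk_mem_prod (hxmem _) (hymem _))
    obtain ⟨hxb, hyb⟩ := hmem
    set σ : ℕ → ℕ := φ ∘ ψ with hσ
    have hσm : StrictMono σ := hφm.comp hψm
    have hxt : Tendsto (fun n => x (σ n)) atTop (nhds xb) :=
      (continuous_fst.tendsto _).comp hψt
    have hyt : Tendsto (fun n => y (σ n)) atTop (nhds yb) :=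
      (continuous_snd.tendsto _).comp hψt
    have hθσ : Tendsto (fun n => θ (σ n)) atTop (nhds 0) :=
      hθ0'.comp hσm.tendsto_atTop
    have hxt1 : Tendsto (fun n => x (σ n + 1)) atTop (nhds xb) := by
      have heq : ∀ n, x (σ n + 1) = x (σ n) + θ (σ n) • (y (σ n) - x (σ n)) :=
        fun n => hupd _
      simp only [heq]
      have := hxt.add (hθσ.smul (hyt.sub hxt))
      simpa using this
    have hpc : ∀ (u : ℕ → EuclideanSpace ℝ (Fin N)), (∀ n, u n ∈ Dt) → ∀ z, z ∈ Dt →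
        Tendsto u atTop (nhds z) → Tendsto (fun n => p (u n)) atTop (nhds (p z)) := by
      intro u hu z hz ht
      exact (hpcont z hz).tendsto.comp
        (tendsto_nhdsWithin_iff.mpr ⟨ht, Eventually.of_forall hu⟩)
    have hA : Tendsto (fun n => ⟪p (x (σ n + 1)), y (σ n) - x (σ n)⟫) atTop
        (nhds ⟪p xb, yb - xb⟫) :=
      (hpc _ (fun n => hxmem _) xb hxb hxt1).inner (hyt.sub hxt)
    have hC : Tendsto (fun n => ⟪p (x (σ n)), y (σ n) - x (σ n)⟫) atTop
        (nhds ⟪p xb, yb - xb⟫) :=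
      (hpc _ (fun n => hxmem _) xb hxb hxt).inner (hyt.sub hxt)
    have hge : β * ⟪p xb, yb - xb⟫ ≤ ⟪p xb, yb - xb⟫ :=
      le_of_tendsto_of_tendsto' (hC.const_mul β) hA
        (fun n => (not_le.mp (hφP (ψ n))).le)
    have hlt : ⟪p xb, yb - xb⟫ ≤ -δ :=
      le_of_tendsto' hC (fun n => hneg (σ n))
    nlinarith
  · -- only finitely many reductions
    rw [Filter.not_frequently] at hfail
    simp only [not_not] at hfail
    obtain ⟨K, hK⟩ := eventually_atTop.mp hfail
    have hθmono : ∀ k, K ≤ k → θ K ≤ θ k := by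
      intro k
      induction k with
      | zero => intro hk; rw [Nat.le_zero.mp hk]
      | succ k ih =>
        intro hk
        rcases Nat.lt_or_ge K (k + 1) with h | h
        · have hk' : K ≤ k := by omega
          exact (ih hk').trans ((hstep k).1 (hK k hk')).1.1
        · rw [le_antisymm hk h]
    have hdec : ∀ k, K ≤ k → η (x (k + 1)) ≤ η (x k) - β * θ K * δ := by
      intro k hk
      have hg := grad_convex_ineq η hη (hgrad (x (k + 1))) (x k)
      have hinner : ⟪p (x (k + 1)), x k - x (k + 1)⟫
          = -(θ k * ⟪p (x (k + 1)), y k - x k⟫) := by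
        rw [show x k - x (k + 1) = -(θ k • (y k - x k)) by rw [hupd]; abel,
          inner_neg_right, real_inner_smul_right]
      rw [hinner] at hg
      have hT := hK k hk
      have h2 := hneg k
      have h3 : θ k * ⟪p (x (k + 1)), y k - x k⟫ ≤ θ k * (β * ⟪p (x k), y k - x k⟫) :=
        mul_le_mul_of_nonneg_left hT (hθpos k).le
      have h4 : θ k * (β * ⟪p (x k), y k - x k⟫) ≤ θ k * (β * (-δ)) := by
        apply mul_le_mul_of_nonneg_left _ (hθpos k).le
        exact mul_le_mul_of_nonneg_left h2 hβ0.le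
      have h5 : θ k * (β * (-δ)) ≤ θ K * (β * (-δ)) := by
        have h6 := mul_le_mul_of_nonneg_right (hθmono k hk) (mul_pos hβ0 hδ).le
        nlinarith
      linarith
    have hsum : ∀ n : ℕ, η (x (K + n)) ≤ η (x K) - n * (β * θ K * δ) := by
      intro n
      induction n with
      | zero => simp
      | succ n ih =>
        have h := hdec (K + n) (by omega)
        have : K + (n + 1) = (K + n) + 1 := by omega
        rw [this]
        push_cast
        linarith
    obtain ⟨C, hC⟩ := hbdd
    have hpos : 0 < β * θ K * δ := mul_pos (mul_pos hβ0 (hθpos K)) hδ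
    obtain ⟨n, hn⟩ := exists_nat_gt ((η (x K) - C) / (β * θ K * δ))
    have h1 := hsum n
    have h2 := hC _ (hxmem (K + n))
    have h3 : η (x K) - C < n * (β * θ K * δ) := by
      rwa [div_lt_iff₀ hpos] at hn
    linarith
end
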